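/- With α = e^{-κ_a τ}, β = e^{-κ_e τ}, C₁(n), C₂(n) as in the equi-multiple-dose Bateman solution, the area under the curve over I_n = [(n-1)τ, nτ] equals (κ_a d γ/(κ_a - κ_e))[(1-β^n)/κ_e - (1-α^n)/κ_a]. -/

import Mathlib

lemma int_exp (κ a b : ℝ) (hκ : κ ≠ 0) :
    ∫ t in a..b, Real.exp (-κ * (t - a)) = (1 - Real.exp (-κ * (b - a))) / κ := by
  have h1 : ∫ t in a..b, Real.exp (-κ * (t - a)) = ∫ t in a - a..b - a, Real.exp (-κ * t) := by
    rw [← intervalIntegral.integral_comp_sub_right (fun t => Real.exp (-κ * t)) a]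
  have hc : (-κ) ≠ 0 := neg_ne_zero.mpr hκ
  have h2 := intervalIntegral.integral_comp_mul_left (a := 0) (b := b - a)
    (fun x => Real.exp x) hc
  rw [h1, sub_self, h2, integral_exp]
  simp only [mul_zero, Real.exp_zero, smul_eq_mul]
  field_simp
  ring

theorem AUC_In (κa κe γ d τ : ℝ) (hκa : 0 < κa) (hκe : 0 < κe) (hne : κa ≠ κe)
    (hγ : 0 < γ) (hd : 0 < d) (hτ : 0 < τ)
    (α β : ℝ) (hα : α = Real.exp (-κa * τ)) (hβ : β = Real.exp (-κe * τ))
    (n : ℕ) (hn : 1 ≤ n) :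
    (∫ t in (((n : ℝ) - 1) * τ)..((n : ℝ) * τ),
      ((κa * γ * d / (κa - κe)) * ((1 - β ^ n) / (1 - β)) *
          Real.exp (-κe * (t - ((n : ℝ) - 1) * τ)) -
       (κa * γ * d / (κa - κe)) * ((1 - α ^ n) / (1 - α)) *
          Real.exp (-κa * (t - ((n : ℝ) - 1) * τ))))
      = (κa * d * γ / (κa - κe)) * ((1 - β ^ n) / κe - (1 - α ^ n) / κa) := by
  set a : ℝ := ((n : ℝ) - 1) * τ with ha
  set b : ℝ := (n : ℝ) * τ with hb
  have hβ1 : β < 1 := by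
    rw [hβ, ← Real.exp_zero]
    exact Real.exp_lt_exp.mpr (by nlinarith)
  have hα1 : α < 1 := by
    rw [hα, ← Real.exp_zero]
    exact Real.exp_lt_exp.mpr (by nlinarith)
  have hβ0 : (1 : ℝ) - β ≠ 0 := by linarith
  have hα0 : (1 : ℝ) - α ≠ 0 := by linarith
  have hba : b - a = τ := by rw [ha, hb]; ring
  have hint1 : IntervalIntegrable
      (fun t => (κa * γ * d / (κa - κe)) * ((1 - β ^ n) / (1 - β)) *
        Real.exp (-κe * (t - a))) MeasureTheory.volume a b := by
    apply Continuous.intervalIntegrable; fun_prop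
  have hint2 : IntervalIntegrable
      (fun t => (κa * γ * d / (κa - κe)) * ((1 - α ^ n) / (1 - α)) *
        Real.exp (-κa * (t - a))) MeasureTheory.volume a b := by
    apply Continuous.intervalIntegrable; fun_prop
  rw [intervalIntegral.integral_sub hint1 hint2,
    intervalIntegral.integral_const_mul, intervalIntegral.integral_const_mul,
    int_exp κe a b (ne_of_gt hκe), int_exp κa a b (ne_of_gt hκa), hba, ← hβ, ← hα]
  have hd1 : κa - κe ≠ 0 := sub_ne_zero.mpr hne
  field_simp
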